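/- Define q(x,t) = 8 e^{2x + 4it + 2i·arctan(4e^{4x})}/(1 + 4i e^{4x}) and r(x,t) = conj(q(x,t)) = 8 e^{2x - 4it - 2i·arctan(4e^{4x})}/(1 - 4i e^{4x}). Then the pair (q, r) solves the Chen–Lee–Liu system: i q_t + q_{xx} - i q q_x r = 0 and i r_t - r_{xx} - i q r r_x = 0 for all x, t ∈ ℝ. -/

import Mathlib

open Complex Real

/-- Partial derivative in the first (spatial) variable. -/
noncomputable def px (f : ℝ × ℝ → ℂ) : ℝ × ℝ → ℂ :=
  fun p => deriv (fun x => f (x, p.2)) p.1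

/-- Partial derivative in the second (time) variable. -/
noncomputable def pt (f : ℝ × ℝ → ℂ) : ℝ × ℝ → ℂ :=
  fun p => deriv (fun t => f (p.1, t)) p.2

noncomputable def ca (x : ℝ) : ℂ := Complex.exp (2 * (x:ℂ))
noncomputable def eb (t : ℝ) : ℂ := Complex.exp (4 * I * (t:ℂ))
noncomputable def ebn (t : ℝ) : ℂ := Complex.exp (-(4 * I) * (t:ℂ))

lemma expc (c : ℂ) (t : ℝ) :
    HasDerivAt (fun t : ℝ => Complex.exp (c * (t:ℂ))) (c * Complex.exp (c * (t:ℂ))) t := by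
  have h : HasDerivAt (fun z : ℂ => Complex.exp (c * z)) (c * Complex.exp (c * (t:ℂ))) (t:ℂ) := by
    simpa [mul_comm] using ((hasDerivAt_id (t:ℂ)).const_mul c).cexp
  exact h.comp_ofReal

lemma ca_deriv (x : ℝ) : HasDerivAt ca (2 * ca x) x := expc 2 x

lemma hd_congr {f : ℝ → ℂ} {d d' : ℂ} {x : ℝ} (h : HasDerivAt f d x) (he : d' = d) :
    HasDerivAt f d' x := he ▸ h

lemma dca3 (x : ℝ) : HasDerivAt (fun x : ℝ => ca x ^ 3) (6 * ca x ^ 3) x := by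
  refine hd_congr ((hasDerivAt_pow 3 (ca x)).comp x (ca_deriv x)) ?_; norm_num; ring
lemma dca5 (x : ℝ) : HasDerivAt (fun x : ℝ => ca x ^ 5) (10 * ca x ^ 5) x := by
  refine hd_congr ((hasDerivAt_pow 5 (ca x)).comp x (ca_deriv x)) ?_; norm_num; ring
lemma dca7 (x : ℝ) : HasDerivAt (fun x : ℝ => ca x ^ 7) (14 * ca x ^ 7) x := by
  refine hd_congr ((hasDerivAt_pow 7 (ca x)).comp x (ca_deriv x)) ?_; norm_num; ring
lemma dca4 (x : ℝ) : HasDerivAt (fun x : ℝ => ca x ^ 4) (8 * ca x ^ 4) x := by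
  refine hd_congr ((hasDerivAt_pow 4 (ca x)).comp x (ca_deriv x)) ?_; norm_num; ring
lemma dvv (x : ℝ) : HasDerivAt (fun x : ℝ => (1:ℂ) + 16 * ca x ^ 4) (128 * ca x ^ 4) x := by
  refine hd_congr (((dca4 x).const_mul 16).const_add 1) ?_; ring
lemma dvv2 (x : ℝ) : HasDerivAt (fun x : ℝ => ((1:ℂ) + 16 * ca x ^ 4)^2)
    (256 * ca x ^ 4 * (1 + 16 * ca x ^ 4)) x := by
  refine hd_congr ((dvv x).pow 2) ?_; norm_num; ring

lemma ca_real (x : ℝ) : ca x = ((Real.exp (2*x) : ℝ) : ℂ) := by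
  rw [ca, Complex.ofReal_exp]; push_cast; ring_nf

lemma vv_ne (x : ℝ) : (1:ℂ) + 16 * ca x ^ 4 ≠ 0 := by
  have h : (1:ℂ) + 16 * ca x ^ 4 = ((1 + 16 * (Real.exp (2*x))^4 : ℝ) : ℂ) := by
    rw [ca_real]; push_cast; ring
  rw [h]
  exact_mod_cast (by positivity : (0:ℝ) < 1 + 16 * (Real.exp (2*x))^4).ne'

lemma qd {u v : ℝ → ℂ} {u' v' d : ℂ} {x : ℝ} (hu : HasDerivAt u u' x)
    (hv : HasDerivAt v v' x) (hv0 : v x ≠ 0)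
    (heq : d = (u' * v x - u x * v') / (v x)^2) :
    HasDerivAt (fun y => u y / v y) d x := heq ▸ hu.div hv hv0

lemma key_arctan (y : ℝ) :
    Complex.exp (2 * I * ((Real.arctan y : ℝ) : ℂ)) = (1 + I * y)^2 / (1 + (y:ℂ)^2) := by
  have hs0 : (0:ℝ) < Real.sqrt (1 + y^2) := Real.sqrt_pos.2 (by positivity)
  have hs0' : ((Real.sqrt (1 + y^2) : ℝ) : ℂ) ≠ 0 := by exact_mod_cast hs0.ne'
  have hsq : ((Real.sqrt (1 + y^2) : ℝ) : ℂ)^2 = 1 + (y:ℂ)^2 := by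
    rw [← Complex.ofReal_pow, Real.sq_sqrt (by positivity)]; push_cast; ring
  have h2 : Complex.exp (((Real.arctan y : ℝ) : ℂ) * I)
      = (1 + I * y) / ((Real.sqrt (1 + y^2) : ℝ) : ℂ) := by
    rw [Complex.exp_mul_I, ← Complex.ofReal_cos, ← Complex.ofReal_sin,
      Real.cos_arctan, Real.sin_arctan]
    push_cast
    field_simp
  have h1 : Complex.exp (2 * I * ((Real.arctan y : ℝ) : ℂ))
      = (Complex.exp (((Real.arctan y : ℝ) : ℂ) * I))^2 := by
    rw [sq, ← Complex.exp_add]; ring_nf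
  rw [h1, h2, div_pow, hsq]

lemma den_ne (x : ℝ) : (1:ℂ) + 4 * I * Complex.exp (4 * (x:ℂ)) ≠ 0 := by
  have he : Complex.exp (4 * (x:ℂ)) = ((Real.exp (4*x) : ℝ) : ℂ) := by
    rw [Complex.ofReal_exp]; congr 1; push_cast; ring
  rw [he]
  intro h
  have him := congrArg Complex.im h
  simp at him
  rw [he, Complex.ofReal_re] at him
  exact (Real.exp_pos (4*x)).ne' him

set_option maxHeartbeats 1000000 in
theorem stmt13 (q r : ℝ × ℝ → ℂ)
    (hq : ∀ p : ℝ × ℝ, q p =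
      8 * Complex.exp (2 * p.1 + 4 * I * p.2 + 2 * I * Real.arctan (4 * Real.exp (4 * p.1)))
        / (1 + 4 * I * Complex.exp (4 * p.1)))
    (hr : ∀ p : ℝ × ℝ, r p = starRingEnd ℂ (q p)) :
    (∀ p : ℝ × ℝ, I * pt q p + px (px q) p - I * q p * px q p * r p = 0) ∧
    (∀ p : ℝ × ℝ, I * pt r p - px (px r) p - I * q p * r p * px r p = 0) := by
  have hQ : ∀ p : ℝ × ℝ, q p
      = 8 * eb p.2 * (ca p.1 + 4*I*ca p.1^3) / (1 + 16*ca p.1^4) := by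
    intro p
    rw [hq p, Complex.exp_add, Complex.exp_add, key_arctan]
    have h2 : Complex.exp (4*(p.1:ℂ)) = (ca p.1)^2 := by
      rw [ca, sq, ← Complex.exp_add]; ring_nf
    have hy : ((4*Real.exp (4*p.1) : ℝ):ℂ) = 4*(ca p.1)^2 := by
      rw [ca_real]
      have : Real.exp (2*p.1)^2 = Real.exp (4*p.1) := by
        rw [sq, ← Real.exp_add]; ring_nf
      push_cast [← this]
      ring
    rw [h2, hy]
    have n1 := vv_ne p.1
    have n2 : (1:ℂ) + 4*I*(ca p.1)^2 ≠ 0 := by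
      have := den_ne p.1; rwa [h2] at this
    have n3 : (1:ℂ) + (4*(ca p.1)^2)^2 ≠ 0 := by
      intro h; apply n1; rw [← h]; ring
    simp only [ca, eb] at n1 n2 n3 ⊢
    field_simp
    ring
  have hR : ∀ p : ℝ × ℝ, r p
      = 8 * ebn p.2 * (ca p.1 - 4*I*ca p.1^3) / (1 + 16*ca p.1^4) := by
    intro p
    rw [hr p, hQ p, ca_real p.1]
    simp only [eb, ebn, map_div₀, map_mul, map_add, map_sub, map_pow, map_one, map_ofNat,
      Complex.conj_I, Complex.conj_ofReal, ← Complex.exp_conj]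
    ring_nf
  have hQx : ∀ p : ℝ × ℝ, px q p =
      16 * eb p.2 * (ca p.1 + 12*I*ca p.1^3 - 48*ca p.1^5 - 64*I*ca p.1^7)
        / (1 + 16*ca p.1^4)^2 := by
    intro p
    have hfun : (fun x => q (x, p.2))
        = fun x => 8 * eb p.2 * (ca x + 4*I*ca x^3) / (1 + 16*ca x^4) :=
      funext fun x => hQ (x, p.2)
    show deriv (fun x => q (x, p.2)) p.1 = _
    rw [hfun]
    have hu : HasDerivAt (fun x : ℝ => 8 * eb p.2 * (ca x + 4*I*ca x^3))
        (8 * eb p.2 * (2*ca p.1 + 24*I*ca p.1^3)) p.1 := by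
      refine hd_congr (((ca_deriv p.1).add ((dca3 p.1).const_mul (4*I))).const_mul (8*eb p.2)) ?_
      ring
    refine (qd hu (dvv p.1) (vv_ne p.1) ?_).deriv
    have n1 := vv_ne p.1
    field_simp
    ring
  have hQxx : ∀ p : ℝ × ℝ, px (px q) p =
      32 * eb p.2 * (ca p.1 + 36*I*ca p.1^3 - 352*ca p.1^5 - 1408*I*ca p.1^7
        + 2304*ca p.1^9 + 1024*I*ca p.1^11) / (1 + 16*ca p.1^4)^3 := by
    intro p
    have hfun : (fun x => px q (x, p.2))
        = fun x => 16 * eb p.2 * (ca x + 12*I*ca x^3 - 48*ca x^5 - 64*I*ca x^7)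
          / (1 + 16*ca x^4)^2 :=
      funext fun x => hQx (x, p.2)
    show deriv (fun x => px q (x, p.2)) p.1 = _
    rw [hfun]
    have hu : HasDerivAt
        (fun x : ℝ => 16 * eb p.2 * (ca x + 12*I*ca x^3 - 48*ca x^5 - 64*I*ca x^7))
        (16 * eb p.2 * (2*ca p.1 + 72*I*ca p.1^3 - 480*ca p.1^5 - 896*I*ca p.1^7)) p.1 := by
      refine hd_congr (((((ca_deriv p.1).add ((dca3 p.1).const_mul (12*I))).sub
        ((dca5 p.1).const_mul 48)).sub
        ((dca7 p.1).const_mul (64*I))).const_mul (16*eb p.2)) ?_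
      ring
    refine (qd hu (dvv2 p.1) (pow_ne_zero 2 (vv_ne p.1)) ?_).deriv
    have n1 := vv_ne p.1
    field_simp
    ring
  have hQt : ∀ p : ℝ × ℝ, pt q p =
      4*I*(8 * eb p.2 * (ca p.1 + 4*I*ca p.1^3) / (1 + 16*ca p.1^4)) := by
    intro p
    have hfun : (fun t => q (p.1, t))
        = fun t : ℝ => 8 * eb t * (ca p.1 + 4*I*ca p.1^3) / (1 + 16*ca p.1^4) :=
      funext fun t => hQ (p.1, t)
    show deriv (fun t => q (p.1, t)) p.2 = _
    rw [hfun]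
    refine HasDerivAt.deriv (hd_congr ((((expc (4*I) p.2).const_mul 8).mul_const
      (ca p.1 + 4*I*ca p.1^3)).div_const (1 + 16*ca p.1^4)) ?_)
    simp only [eb]; ring
  have hRx : ∀ p : ℝ × ℝ, px r p =
      16 * ebn p.2 * (ca p.1 - 12*I*ca p.1^3 - 48*ca p.1^5 + 64*I*ca p.1^7)
        / (1 + 16*ca p.1^4)^2 := by
    intro p
    have hfun : (fun x => r (x, p.2))
        = fun x => 8 * ebn p.2 * (ca x - 4*I*ca x^3) / (1 + 16*ca x^4) :=
      funext fun x => hR (x, p.2)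
    show deriv (fun x => r (x, p.2)) p.1 = _
    rw [hfun]
    have hu : HasDerivAt (fun x : ℝ => 8 * ebn p.2 * (ca x - 4*I*ca x^3))
        (8 * ebn p.2 * (2*ca p.1 - 24*I*ca p.1^3)) p.1 := by
      refine hd_congr (((ca_deriv p.1).sub ((dca3 p.1).const_mul (4*I))).const_mul (8*ebn p.2)) ?_
      ring
    refine (qd hu (dvv p.1) (vv_ne p.1) ?_).deriv
    have n1 := vv_ne p.1
    field_simp
    ring
  have hRxx : ∀ p : ℝ × ℝ, px (px r) p =
      32 * ebn p.2 * (ca p.1 - 36*I*ca p.1^3 - 352*ca p.1^5 + 1408*I*ca p.1^7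
        + 2304*ca p.1^9 - 1024*I*ca p.1^11) / (1 + 16*ca p.1^4)^3 := by
    intro p
    have hfun : (fun x => px r (x, p.2))
        = fun x => 16 * ebn p.2 * (ca x - 12*I*ca x^3 - 48*ca x^5 + 64*I*ca x^7)
          / (1 + 16*ca x^4)^2 :=
      funext fun x => hRx (x, p.2)
    show deriv (fun x => px r (x, p.2)) p.1 = _
    rw [hfun]
    have hu : HasDerivAt
        (fun x : ℝ => 16 * ebn p.2 * (ca x - 12*I*ca x^3 - 48*ca x^5 + 64*I*ca x^7))
        (16 * ebn p.2 * (2*ca p.1 - 72*I*ca p.1^3 - 480*ca p.1^5 + 896*I*ca p.1^7)) p.1 := by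
      refine hd_congr (((((ca_deriv p.1).sub ((dca3 p.1).const_mul (12*I))).sub
        ((dca5 p.1).const_mul 48)).add
        ((dca7 p.1).const_mul (64*I))).const_mul (16*ebn p.2)) ?_
      ring
    refine (qd hu (dvv2 p.1) (pow_ne_zero 2 (vv_ne p.1)) ?_).deriv
    have n1 := vv_ne p.1
    field_simp
    ring
  have hRt : ∀ p : ℝ × ℝ, pt r p =
      (-(4*I))*(8 * ebn p.2 * (ca p.1 - 4*I*ca p.1^3) / (1 + 16*ca p.1^4)) := by
    intro p
    have hfun : (fun t => r (p.1, t))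
        = fun t : ℝ => 8 * ebn t * (ca p.1 - 4*I*ca p.1^3) / (1 + 16*ca p.1^4) :=
      funext fun t => hR (p.1, t)
    show deriv (fun t => r (p.1, t)) p.2 = _
    rw [hfun]
    refine HasDerivAt.deriv (hd_congr ((((expc (-(4*I)) p.2).const_mul 8).mul_const
      (ca p.1 - 4*I*ca p.1^3)).div_const (1 + 16*ca p.1^4)) ?_)
    simp only [ebn]; ring
  have hBb : ∀ t : ℝ, ebn t = (eb t)⁻¹ := by
    intro t
    rw [eb, ebn, ← Complex.exp_neg]
    congr 1; ring
  have h2 : I^2 = -1 := Complex.I_sq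
  have h3 : I^3 = -I := by rw [pow_succ, h2]; ring
  have h4 : I^4 = 1 := by rw [pow_succ, h3]; simp [Complex.I_mul_I]
  constructor
  · intro p
    rw [hQt p, hQxx p, hQx p, hQ p, hR p, hBb p.2]
    have n1 := vv_ne p.1
    have hb : eb p.2 ≠ 0 := Complex.exp_ne_zero _
    field_simp
    ring_nf
    simp only [h2, h3, h4]
    ring
  · intro p
    rw [hRt p, hRxx p, hRx p, hQ p, hR p, hBb p.2]
    have n1 := vv_ne p.1
    have hb : eb p.2 ≠ 0 := Complex.exp_ne_zero _
    field_simp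
    ring_nf
    simp only [h2, h3, h4]
    ring
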